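/- For c > 0 and integers 1 ≤ r ≤ l define I_{l,r}(c) := (c^{r-1}/(2l-r-1)!) ∫_0^∞ (σ + c) σ^{2l-r-1} exp(−σ²/2 − cσ) dσ, and C_{l,r} := Σ_{π} ∏_{B ∈ π} c_{|B|}, the sum ranging over all set partitions π of {1, …, l} into exactly r blocks, where c_m := ∏_{i=1}^{m-1}(2i - 1). Then for every integer l ≥ 1 and every c > 0, Σ_{r=1}^{l} C_{l,r} · I_{l,r}(c) = 1. -/

import Mathlib

open Finset MeasureTheory

/-- `I l r c` : the limiting probability of a fixed bouquet configuration with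
`r` binary trees spanning `l` marked vertices, in the critical regime `κ = c√N`. -/
noncomputable def I (l r : ℕ) (c : ℝ) : ℝ :=
  (c ^ (r - 1) / (Nat.factorial (2 * l - r - 1) : ℝ)) *
    ∫ σ in Set.Ioi (0 : ℝ),
      (σ + c) * σ ^ (2 * l - r - 1) * Real.exp (-σ ^ 2 / 2 - c * σ)

/-- `cShape m = ∏_{i=1}^{m-1} (2i-1)`: the number of binary tree shapes with
`m` labelled leaves (as a real number), with `cShape 1 = 1`. -/
def cShape (m : ℕ) : ℝ := ∏ i ∈ Finset.range (m - 1), (2 * (i : ℝ) + 1)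

/-- `C l r = Σ_π ∏_{B ∈ π} c_{|B|}`, summing over set partitions of `{1,…,l}`
into exactly `r` non-empty blocks. -/
noncomputable def C (l r : ℕ) : ℝ :=
  ∑ P ∈ (Finset.univ : Finset (Finpartition (Finset.univ : Finset (Fin l)))).filter
      (fun P => P.parts.card = r),
    ∏ B ∈ P.parts, cShape B.card

namespace Stmt15

lemma cShape_one : cShape 1 = 1 := by simp [cShape]

lemma cShape_succ {m : ℕ} (hm : 1 ≤ m) :
    cShape (m + 1) = (2 * (m : ℝ) - 1) * cShape m := by
  obtain ⟨k, rfl⟩ := Nat.exists_eq_add_of_le hm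
  unfold cShape
  rw [show 1 + k + 1 - 1 = k + 1 by omega, show 1 + k - 1 = k by omega,
    Finset.prod_range_succ]
  push_cast; ring

variable {α : Type*} [DecidableEq α]

/-- Insert a new element `a` into the block `B` of `Q` (where `B = ∅` encodes
"create a new singleton block"). -/
noncomputable def extendPart (a : α) {t : Finset α} (Q : Finpartition t) (B : Finset α) :
    Finpartition (insert a t) :=
  if h : a ∉ t ∧ (B = ∅ ∨ B ∈ Q.parts) then
    { parts := insert (insert a B) (Q.parts.erase B)
      supIndep := by
        rw [Finset.supIndep_iff_pairwiseDisjoint, coe_insert]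
        refine Set.PairwiseDisjoint.insert
          (Q.disjoint.subset (by exact_mod_cast Finset.erase_subset _ _)) ?_
        intro C hC hne
        simp only [Finset.mem_coe, Finset.mem_erase] at hC
        have haC : a ∉ C := fun ha => h.1 (Q.le hC.2 ha)
        simp only [id]
        rw [Finset.disjoint_insert_left]
        refine ⟨haC, ?_⟩
        rcases h.2 with rfl | hB
        · exact Finset.disjoint_empty_left _
        · exact Q.disjoint hB hC.2 (Ne.symm hC.1)
      sup_parts := by
        have hBt : B ⊔ (Q.parts.erase B).sup id = t := by
          rcases h.2 with rfl | hB
          · rw [Finset.erase_eq_of_notMem (by simpa using Q.bot_notMem), Q.sup_parts]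
            simp
          · conv_rhs => rw [← Q.sup_parts, ← Finset.insert_erase hB, Finset.sup_insert]
            rfl
        rw [Finset.sup_insert, id, Finset.insert_eq a B]
        rw [Finset.sup_eq_union] at hBt ⊢
        rw [Finset.union_assoc, hBt, ← Finset.insert_eq]
      bot_notMem := by
        simp only [Finset.bot_eq_empty, Finset.mem_insert, not_or]
        exact ⟨(Finset.insert_ne_empty _ _).symm,
          fun hmem => Q.bot_notMem (Finset.mem_of_mem_erase hmem)⟩ }
  else Finpartition.indiscrete (by simp)

variable {a : α} {t : Finset α} {Q : Finpartition t} {B : Finset α}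

lemma extendPart_parts (h1 : a ∉ t) (h2 : B = ∅ ∨ B ∈ Q.parts) :
    (extendPart a Q B).parts = insert (insert a B) (Q.parts.erase B) := by
  rw [extendPart, dif_pos ⟨h1, h2⟩]

lemma insert_not_mem_erase (h1 : a ∉ t) {D : Finset α} : insert a B ∉ Q.parts.erase D :=
  fun hmem => h1 (Q.le (Finset.mem_of_mem_erase hmem) (Finset.mem_insert_self a B))

lemma extendPart_card (h1 : a ∉ t) (h2 : B = ∅ ∨ B ∈ Q.parts) :
    (extendPart a Q B).parts.card
      = if B = ∅ then Q.parts.card + 1 else Q.parts.card := by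
  rw [extendPart_parts h1 h2, Finset.card_insert_of_notMem (insert_not_mem_erase h1)]
  rcases h2 with rfl | hB
  · rw [Finset.erase_eq_of_notMem (by simpa using Q.bot_notMem), if_pos rfl]
  · rw [if_neg (Q.nonempty_of_mem_parts hB).ne_empty,
      Finset.card_erase_of_mem hB]
    have : 1 ≤ Q.parts.card := Finset.card_pos.2 ⟨B, hB⟩
    omega

lemma extendPart_weight (h1 : a ∉ t) (h2 : B = ∅ ∨ B ∈ Q.parts) :
    ∏ D ∈ (extendPart a Q B).parts, cShape D.card
      = (if B = ∅ then 1 else (2 * (B.card : ℝ) - 1)) * ∏ D ∈ Q.parts, cShape D.card := by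
  have haB : a ∉ B := by
    rcases h2 with rfl | hB
    · simp
    · exact fun ha => h1 (Q.le hB ha)
  rw [extendPart_parts h1 h2, Finset.prod_insert (insert_not_mem_erase h1),
    Finset.card_insert_of_notMem haB]
  rcases h2 with rfl | hB
  · rw [Finset.erase_eq_of_notMem (by simpa using Q.bot_notMem), if_pos rfl]
    simp [cShape_one]
  · rw [if_neg (Q.nonempty_of_mem_parts hB).ne_empty,
      cShape_succ (Finset.card_pos.2 (Q.nonempty_of_mem_parts hB)),
      mul_assoc, Finset.mul_prod_erase Q.parts (fun D => cShape D.card) hB]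

/-- Remove `a` from a finpartition of `insert a t`, obtaining a finpartition of `t`. -/
noncomputable def shrink (h1 : a ∉ t) (P : Finpartition (insert a t)) : Finpartition t :=
  { parts := (insert ((P.part a).erase a) (P.parts.erase (P.part a))).erase ∅
    supIndep := by
      have ha : a ∈ insert a t := Finset.mem_insert_self a t
      rw [Finset.supIndep_iff_pairwiseDisjoint]
      refine Set.PairwiseDisjoint.subset ?_
        (by exact_mod_cast Finset.erase_subset _ _ :
          ((insert ((P.part a).erase a) (P.parts.erase (P.part a))).erase ∅ : Set (Finset α))
            ⊆ (insert ((P.part a).erase a) (P.parts.erase (P.part a)) : Set (Finset α)))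
      refine Set.PairwiseDisjoint.insert
        (P.disjoint.subset (by exact_mod_cast Finset.erase_subset _ _)) ?_
      intro D hD _
      simp only [Finset.mem_coe, Finset.mem_erase] at hD
      simp only [id]
      exact (P.disjoint (P.part_mem.2 ha) hD.2 (Ne.symm hD.1)).mono_left
        (Finset.erase_subset a _)
    sup_parts := by
      have ha : a ∈ insert a t := Finset.mem_insert_self a t
      have haX : a ∉ (P.parts.erase (P.part a)).sup id := by
        intro hmem
        obtain ⟨D, hD, haD⟩ := Finset.mem_sup.1 hmem
        exact (Finset.mem_erase.1 hD).1
          (P.eq_of_mem_parts (Finset.mem_of_mem_erase hD) (P.part_mem.2 ha) haD (P.mem_part ha))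
      have hsup : P.part a ⊔ (P.parts.erase (P.part a)).sup id = insert a t := by
        conv_rhs => rw [← P.sup_parts, ← Finset.insert_erase (P.part_mem.2 ha),
          Finset.sup_insert]
        rfl
      have : ((insert ((P.part a).erase a) (P.parts.erase (P.part a))).erase ∅).sup id
          = (insert ((P.part a).erase a) (P.parts.erase (P.part a))).sup id := by
        exact_mod_cast Finset.sup_erase_bot _
      rw [this, Finset.sup_insert, id]
      rw [Finset.sup_eq_union] at hsup ⊢
      rw [← Finset.erase_eq_of_notMem haX, ← Finset.erase_union_distrib, hsup,
        Finset.erase_insert h1]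
    bot_notMem := by simp }

lemma shrink_mem (h1 : a ∉ t) (P : Finpartition (insert a t)) :
    (P.part a).erase a = ∅ ∨ (P.part a).erase a ∈ (shrink h1 P).parts := by
  by_cases hB : (P.part a).erase a = ∅
  · exact Or.inl hB
  · exact Or.inr (Finset.mem_erase.2 ⟨hB, Finset.mem_insert_self _ _⟩)

lemma extendPart_shrink (h1 : a ∉ t) (P : Finpartition (insert a t)) :
    extendPart a (shrink h1 P) ((P.part a).erase a) = P := by
  have ha : a ∈ insert a t := Finset.mem_insert_self a t
  apply Finpartition.ext
  rw [extendPart_parts h1 (shrink_mem h1 P)]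
  have hiB : insert a ((P.part a).erase a) = P.part a := Finset.insert_erase (P.mem_part ha)
  have hBX : (P.part a).erase a ∉ P.parts.erase (P.part a) := by
    intro hmem
    have hBparts : (P.part a).erase a ∈ P.parts := Finset.mem_of_mem_erase hmem
    have hne : (P.part a).erase a ≠ P.part a := (Finset.mem_erase.1 hmem).1
    obtain ⟨x, hx⟩ := P.nonempty_of_mem_parts hBparts
    exact Finset.disjoint_left.1 (P.disjoint hBparts (P.part_mem.2 ha) hne) hx
      (Finset.erase_subset a _ hx)
    
  have hparts : (shrink h1 P).parts.erase ((P.part a).erase a)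
      = P.parts.erase (P.part a) := by
    show ((insert ((P.part a).erase a) (P.parts.erase (P.part a))).erase ∅).erase
        ((P.part a).erase a) = _
    rw [Finset.erase_right_comm, Finset.erase_insert hBX,
      Finset.erase_eq_of_notMem
        (fun h => P.bot_notMem (by simpa using Finset.mem_of_mem_erase h))]
  rw [hparts, hiB, Finset.insert_erase (P.part_mem.2 ha)]

lemma sum_extendPart [Fintype α] (h1 : a ∉ t) (F : Finpartition (insert a t) → ℝ) :
    ∑ Q : Finpartition t, ∑ B ∈ insert ∅ Q.parts, F (extendPart a Q B)
      = ∑ P : Finpartition (insert a t), F P := by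
  rw [Finset.sum_sigma']
  refine Finset.sum_bij (fun p _ => extendPart a p.1 p.2) (fun _ _ => Finset.mem_univ _)
    ?_ ?_ (fun _ _ => rfl)
  · -- injectivity
    rintro ⟨Q1, B1⟩ hp ⟨Q2, B2⟩ hq heq
    simp only [Finset.mem_sigma, Finset.mem_univ, true_and, Finset.mem_insert] at hp hq
    have hp' : B1 = ∅ ∨ B1 ∈ Q1.parts := hp
    have hq' : B2 = ∅ ∨ B2 ∈ Q2.parts := hq
    have haB1 : a ∉ B1 := by
      rcases hp' with rfl | hB
      · simp
      · exact fun haB => h1 (Q1.le hB haB)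
    have haB2 : a ∉ B2 := by
      rcases hq' with rfl | hB
      · simp
      · exact fun haB => h1 (Q2.le hB haB)
    have heq' : extendPart a Q1 B1 = extendPart a Q2 B2 := heq
    have hparts : insert (insert a B1) (Q1.parts.erase B1)
        = insert (insert a B2) (Q2.parts.erase B2) := by
      rw [← extendPart_parts h1 hp', ← extendPart_parts h1 hq', heq']
    have hB : B1 = B2 := by
      have hmem : insert a B1 ∈ insert (insert a B2) (Q2.parts.erase B2) := by
        rw [← hparts]; exact Finset.mem_insert_self _ _
      rcases Finset.mem_insert.1 hmem with h | h
      · have := congrArg (fun s => Finset.erase s a) h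
        simpa [Finset.erase_insert haB1, Finset.erase_insert haB2] using this
      · exact absurd h (insert_not_mem_erase (Q := Q2) (B := B1) h1)
    subst hB
    have hE : Q1.parts.erase B1 = Q2.parts.erase B1 := by
      have h1' := insert_not_mem_erase (Q := Q1) (B := B1) (D := B1) h1
      have h2' := insert_not_mem_erase (Q := Q2) (B := B1) (D := B1) h1
      rw [← Finset.erase_insert h1', ← Finset.erase_insert h2', hparts]
    have hQ : Q1 = Q2 := by
      apply Finpartition.ext
      rcases hp' with rfl | hB1
      · rcases hq' with h | hB2
        · rw [Finset.erase_eq_of_notMem (by simpa using Q1.bot_notMem),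
            Finset.erase_eq_of_notMem (by simpa using Q2.bot_notMem)] at hE
          exact hE
        · exact absurd hB2 Q2.bot_notMem
      · have hB2 : B1 ∈ Q2.parts := by
          rcases hq' with rfl | h
          · exact absurd hB1 Q1.bot_notMem
          · exact h
        rw [← Finset.insert_erase hB1, ← Finset.insert_erase hB2, hE]
    subst hQ
    rfl
  · -- surjectivity
    intro P _
    exact ⟨⟨shrink h1 P, (P.part a).erase a⟩,
      Finset.mem_sigma.2 ⟨Finset.mem_univ _, Finset.mem_insert.2 (shrink_mem h1 P)⟩,
      extendPart_shrink h1 P⟩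

/-- Weighted count of finpartitions of `s` into `r` parts. -/
noncomputable def W [Fintype α] (s : Finset α) (r : ℕ) : ℝ :=
  ∑ P ∈ (Finset.univ : Finset (Finpartition s)).filter (fun P => P.parts.card = r),
    ∏ B ∈ P.parts, cShape B.card

lemma W_eq_sum_ite [Fintype α] (s : Finset α) (r : ℕ) :
    W s r = ∑ P : Finpartition s,
      (if P.parts.card = r then ∏ B ∈ P.parts, cShape B.card else 0) := by
  rw [W, Finset.sum_filter]

lemma W_insert_zero [Fintype α] (h1 : a ∉ t) : W (insert a t) 0 = 0 := by
  rw [W_eq_sum_ite]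
  refine Finset.sum_eq_zero fun P _ => ?_
  rw [if_neg]
  intro hcard
  rw [Finset.card_eq_zero] at hcard
  have := P.sup_parts
  rw [hcard] at this
  simp only [Finset.sup_empty] at this
  exact (Finset.insert_ne_empty a t) (by exact_mod_cast this.symm)

lemma W_insert [Fintype α] (h1 : a ∉ t) (r : ℕ) :
    W (insert a t) (r + 1)
      = W t r + (2 * (t.card : ℝ) - (r + 1)) * W t (r + 1) := by
  rw [W_eq_sum_ite, ← sum_extendPart h1]
  have step : ∀ Q : Finpartition t,
      (∑ B ∈ insert ∅ Q.parts,
        if (extendPart a Q B).parts.card = r + 1 then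
          ∏ D ∈ (extendPart a Q B).parts, cShape D.card else 0)
      = (if Q.parts.card = r then ∏ D ∈ Q.parts, cShape D.card else 0)
        + (if Q.parts.card = r + 1 then
            (2 * (t.card : ℝ) - (r + 1)) * ∏ D ∈ Q.parts, cShape D.card else 0) := by
    intro Q
    rw [Finset.sum_insert (by simpa using Q.bot_notMem)]
    congr 1
    · rw [extendPart_card h1 (Or.inl rfl), extendPart_weight h1 (Or.inl rfl)]
      simp only [if_true, one_mul, Nat.add_right_cancel_iff]
    · by_cases hQ : Q.parts.card = r + 1
      · rw [if_pos hQ]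
        have hsum : ∑ B ∈ Q.parts, (2 * (B.card : ℝ) - 1)
            = 2 * (t.card : ℝ) - (r + 1) := by
          rw [Finset.sum_sub_distrib, ← Finset.mul_sum, Finset.sum_const, nsmul_eq_mul,
            mul_one, ← Nat.cast_sum, Q.sum_card_parts, hQ]
          push_cast; ring
        rw [← hsum, Finset.sum_mul]
        refine Finset.sum_congr rfl fun B hB => ?_
        rw [extendPart_card h1 (Or.inr hB), extendPart_weight h1 (Or.inr hB),
          if_neg (Q.nonempty_of_mem_parts hB).ne_empty,
          if_neg (Q.nonempty_of_mem_parts hB).ne_empty, if_pos hQ]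
      · rw [if_neg hQ, Finset.sum_eq_zero]
        intro B hB
        rw [extendPart_card h1 (Or.inr hB),
          if_neg (Q.nonempty_of_mem_parts hB).ne_empty, if_neg hQ]
  rw [Finset.sum_congr rfl (fun Q _ => step Q), Finset.sum_add_distrib,
    ← W_eq_sum_ite]
  congr 1
  rw [W_eq_sum_ite, Finset.mul_sum]
  refine Finset.sum_congr rfl fun Q _ => ?_
  by_cases hQ : Q.parts.card = r + 1 <;> simp [hQ]

/-- The recursively defined weighted partition numbers. -/
noncomputable def g : ℕ → ℕ → ℝ
  | 0, 0 => 1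
  | 0, _ + 1 => 0
  | _ + 1, 0 => 0
  | n + 1, r + 1 => g n r + (2 * (n : ℝ) - (r + 1)) * g n (r + 1)

lemma W_empty [Fintype α] (r : ℕ) : W (∅ : Finset α) r = g 0 r := by
  have hpart : ∀ P : Finpartition (∅ : Finset α), P.parts = ∅ := by
    intro P
    exact Finpartition.parts_eq_empty_iff.mpr rfl
  rw [W_eq_sum_ite]
  rcases Finset.univ_nonempty (α := Finpartition (∅ : Finset α)) with ⟨P0, _⟩
  have huniv : (Finset.univ : Finset (Finpartition (∅ : Finset α))) = {P0} := by
    apply Finset.eq_singleton_iff_unique_mem.2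
    exact ⟨Finset.mem_univ _, fun Q _ => Finpartition.ext (by rw [hpart, hpart])⟩
  rw [huniv, Finset.sum_singleton, hpart P0]
  cases r with
  | zero => simp [g]
  | succ r => simp [g]

lemma W_eq_g [Fintype α] : ∀ (n : ℕ) (s : Finset α), s.card = n → ∀ r, W s r = g n r := by
  intro n
  induction n with
  | zero =>
    intro s hs r
    rw [Finset.card_eq_zero] at hs
    subst hs
    exact W_empty r
  | succ n ih =>
    intro s hs r
    have hne : s.Nonempty := Finset.card_pos.1 (by omega)
    obtain ⟨b, hb⟩ := hne
    have hbs : s = insert b (s.erase b) := (Finset.insert_erase hb).symm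
    have hb' : b ∉ s.erase b := Finset.notMem_erase b s
    have hcard : (s.erase b).card = n := by
      rw [Finset.card_erase_of_mem hb, hs]; rfl
    cases r with
    | zero =>
      rw [hbs, W_insert_zero hb']
      rfl
    | succ r =>
      rw [hbs, W_insert hb' r, ih _ hcard r, ih _ hcard (r + 1), hcard]
      rfl

lemma g_eq_zero_of_lt : ∀ n r : ℕ, n < r → g n r = 0 := by
  intro n
  induction n with
  | zero => intro r hr; cases r with
    | zero => omega
    | succ r => rfl
  | succ n ih =>
    intro r hr
    cases r with
    | zero => omega
    | succ r =>
      show g n r + (2 * (n : ℝ) - (r + 1)) * g n (r + 1) = 0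
      rw [ih r (by omega), ih (r + 1) (by omega)]
      ring

lemma g_zero_of_pos (n : ℕ) (hn : 1 ≤ n) : g n 0 = 0 := by
  cases n with
  | zero => omega
  | succ n => rfl

lemma C_eq_g (l r : ℕ) : C l r = g l r := by
  have := W_eq_g (α := Fin l) l Finset.univ (by simp) r
  rw [← this]
  rfl

section Analysis

open Real Set Filter

variable {c : ℝ}

/-- `Kint c n = ∫_0^∞ (σ+c) σ^n e^{-σ²/2 - cσ} dσ`. -/
noncomputable def Kint (c : ℝ) (n : ℕ) : ℝ :=
  ∫ σ in Set.Ioi (0 : ℝ), (σ + c) * σ ^ n * Real.exp (-σ ^ 2 / 2 - c * σ)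

/-- `Jint c n = ∫_0^∞ σ^n e^{-σ²/2 - cσ} dσ`. -/
noncomputable def Jint (c : ℝ) (n : ℕ) : ℝ :=
  ∫ σ in Set.Ioi (0 : ℝ), σ ^ n * Real.exp (-σ ^ 2 / 2 - c * σ)

lemma intJ (hc : 0 < c) (n : ℕ) :
    IntegrableOn (fun σ : ℝ => σ ^ n * Real.exp (-σ ^ 2 / 2 - c * σ)) (Set.Ioi 0) := by
  have hdom : IntegrableOn (fun x : ℝ => x ^ (n : ℝ) * Real.exp (-(1/2) * x ^ 2))
      (Set.Ioi 0) :=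
    integrableOn_rpow_mul_exp_neg_mul_sq (by norm_num)
      (by have := (Nat.cast_nonneg n : (0:ℝ) ≤ n); linarith)
  refine hdom.mono' ?_ ?_
  · exact (Continuous.aestronglyMeasurable (by continuity)).restrict
  · filter_upwards [MeasureTheory.ae_restrict_mem measurableSet_Ioi] with σ hσ
    have hσ0 : (0 : ℝ) < σ := hσ
    rw [Real.norm_eq_abs, abs_mul, abs_of_nonneg (Real.exp_pos _).le,
      abs_of_nonneg (pow_nonneg hσ0.le n), ← Real.rpow_natCast σ n]
    exact mul_le_mul_of_nonneg_left
      (Real.exp_le_exp.2 (by nlinarith [mul_pos hc hσ0]))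
      (Real.rpow_nonneg hσ0.le _)

lemma intK (hc : 0 < c) (n : ℕ) :
    IntegrableOn (fun σ : ℝ => (σ + c) * σ ^ n * Real.exp (-σ ^ 2 / 2 - c * σ))
      (Set.Ioi 0) := by
  have h := (intJ hc (n + 1)).add ((intJ hc n).const_mul c)
  exact MeasureTheory.IntegrableOn.congr_fun h
    (fun σ _ => by simp only [Pi.add_apply]; ring) measurableSet_Ioi

lemma tendsto_aux (hc : 0 < c) (k : ℕ) :
    Tendsto (fun σ : ℝ => σ ^ k * Real.exp (-σ ^ 2 / 2 - c * σ)) atTop (nhds 0) := by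
  refine squeeze_zero' ?_ ?_ (tendsto_pow_mul_exp_neg_atTop_nhds_zero k)
  · filter_upwards [eventually_ge_atTop (0 : ℝ)] with σ hσ
    positivity
  · filter_upwards [eventually_ge_atTop (2 : ℝ)] with σ hσ
    have hσ0 : (0 : ℝ) ≤ σ := by linarith
    exact mul_le_mul_of_nonneg_left
      (Real.exp_le_exp.2 (by nlinarith [mul_nonneg hc.le hσ0]))
      (pow_nonneg hσ0 k)

lemma K_zero (hc : 0 < c) : Kint c 0 = 1 := by
  have hderiv : ∀ x ∈ Set.Ici (0 : ℝ),
      HasDerivAt (fun σ : ℝ => -Real.exp (-σ ^ 2 / 2 - c * σ))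
        ((x + c) * x ^ 0 * Real.exp (-x ^ 2 / 2 - c * x)) x := by
    intro x _
    have h1 : HasDerivAt (fun σ : ℝ => -σ ^ 2 / 2 - c * σ) (-x - c) x := by
      have := (((hasDerivAt_pow 2 x).neg.div_const 2).sub
        ((hasDerivAt_id x).const_mul c))
      refine this.congr_deriv ?_
      simp; ring
    have h2 := (h1.exp).neg
    refine h2.congr_deriv ?_
    ring
  have htend : Tendsto (fun σ : ℝ => -Real.exp (-σ ^ 2 / 2 - c * σ)) atTop (nhds 0) := by
    have := (tendsto_aux hc 0).neg
    simpa using this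
  have := MeasureTheory.integral_Ioi_of_hasDerivAt_of_tendsto'
    hderiv (intK hc 0) htend
  rw [Kint, this]
  norm_num

lemma K_parts (hc : 0 < c) (n : ℕ) : Kint c (n + 1) = ((n : ℝ) + 1) * Jint c n := by
  have hderiv : ∀ x ∈ Set.Ici (0 : ℝ),
      HasDerivAt (fun σ : ℝ => -(σ ^ (n + 1) * Real.exp (-σ ^ 2 / 2 - c * σ)))
        ((x + c) * x ^ (n + 1) * Real.exp (-x ^ 2 / 2 - c * x)
          - ((n : ℝ) + 1) * (x ^ n * Real.exp (-x ^ 2 / 2 - c * x))) x := by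
    intro x _
    have h1 : HasDerivAt (fun σ : ℝ => -σ ^ 2 / 2 - c * σ) (-x - c) x := by
      have := (((hasDerivAt_pow 2 x).neg.div_const 2).sub
        ((hasDerivAt_id x).const_mul c))
      refine this.congr_deriv ?_
      simp; ring
    have h2 := ((hasDerivAt_pow (n + 1) x).mul h1.exp).neg
    refine h2.congr_deriv ?_
    simp only [Nat.add_sub_cancel, Nat.cast_add, Nat.cast_one]
    ring
  have htend : Tendsto (fun σ : ℝ => -(σ ^ (n + 1) * Real.exp (-σ ^ 2 / 2 - c * σ)))
      atTop (nhds 0) := by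
    have := (tendsto_aux hc (n + 1)).neg
    simpa using this
  have hint : IntegrableOn (fun x : ℝ =>
      (x + c) * x ^ (n + 1) * Real.exp (-x ^ 2 / 2 - c * x)
        - ((n : ℝ) + 1) * (x ^ n * Real.exp (-x ^ 2 / 2 - c * x))) (Set.Ioi 0) :=
    (intK hc (n + 1)).sub ((intJ hc n).const_mul _)
  have h0 := MeasureTheory.integral_Ioi_of_hasDerivAt_of_tendsto' hderiv hint htend
  rw [MeasureTheory.integral_sub (intK hc (n + 1)) ((intJ hc n).const_mul _),
    MeasureTheory.integral_const_mul] at h0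
  have : Kint c (n + 1) - ((n : ℝ) + 1) * Jint c n = 0 := by
    rw [Kint, Jint]
    rw [h0]
    norm_num
  linarith

lemma K_lin (hc : 0 < c) (n : ℕ) : Kint c n = Jint c (n + 1) + c * Jint c n := by
  rw [Kint, Jint, Jint]
  rw [MeasureTheory.setIntegral_congr_fun measurableSet_Ioi
    (show Set.EqOn (fun σ : ℝ => (σ + c) * σ ^ n * Real.exp (-σ ^ 2 / 2 - c * σ))
      (fun σ : ℝ => σ ^ (n + 1) * Real.exp (-σ ^ 2 / 2 - c * σ)
        + c * (σ ^ n * Real.exp (-σ ^ 2 / 2 - c * σ))) (Set.Ioi 0)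
      from fun σ _ => by ring)]
  rw [MeasureTheory.integral_add (intJ hc (n + 1)) ((intJ hc n).const_mul c),
    MeasureTheory.integral_const_mul]

lemma key_frac (hc : 0 < c) (n : ℕ) :
    c * Kint c (n + 1) / ((n + 1).factorial : ℝ)
      + ((n : ℝ) + 1) * Kint c (n + 2) / ((n + 2).factorial : ℝ)
      = Kint c n / (n.factorial : ℝ) := by
  have hf1 : ((n + 1).factorial : ℝ) = ((n : ℝ) + 1) * (n.factorial : ℝ) := by
    rw [Nat.factorial_succ]; push_cast; ring
  have hf2 : ((n + 2).factorial : ℝ) = ((n : ℝ) + 2) * ((n + 1).factorial : ℝ) := by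
    rw [show n + 2 = (n + 1) + 1 from rfl, Nat.factorial_succ]; push_cast; ring
  have h0 : (n.factorial : ℝ) ≠ 0 := Nat.cast_ne_zero.2 n.factorial_ne_zero
  have h1 : ((n : ℝ) + 1) ≠ 0 := by positivity
  have h2 : ((n : ℝ) + 2) ≠ 0 := by positivity
  rw [K_parts hc n, K_parts hc (n + 1), K_lin hc n, hf2, hf1]
  push_cast
  field_simp
  ring

end Analysis

lemma main_induction {c : ℝ} (hc : 0 < c) :
    ∀ l : ℕ, 1 ≤ l →
      ∑ i ∈ Finset.range l,
        g l (i + 1) * (c ^ i * Kint c (2 * l - i - 2) / ((2 * l - i - 2).factorial : ℝ))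
        = 1 := by
  intro l hl
  induction l, hl using Nat.le_induction with
  | base =>
    have hg : g 1 1 = 1 := by
      have h0 : g 0 0 = (1 : ℝ) := rfl
      have h1 : g 0 1 = (0 : ℝ) := rfl
      show g 0 0 + (2 * ((0 : ℕ) : ℝ) - (((0 : ℕ) : ℝ) + 1)) * g 0 1 = 1
      rw [h0, h1]; ring
    simp only [Finset.sum_range_one]
    norm_num [hg, K_zero hc]
  | succ l hl ih =>
    have hstep : ∀ i ∈ Finset.range (l + 1),
        g (l + 1) (i + 1)
            * (c ^ i * Kint c (2 * (l + 1) - i - 2) / ((2 * (l + 1) - i - 2).factorial : ℝ))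
          = g l i * (c ^ i * Kint c (2 * l - i) / ((2 * l - i).factorial : ℝ))
            + (2 * (l : ℝ) - ((i : ℝ) + 1)) * g l (i + 1)
              * (c ^ i * Kint c (2 * l - i) / ((2 * l - i).factorial : ℝ)) := by
      intro i _
      have h2 : 2 * (l + 1) - i - 2 = 2 * l - i := by omega
      rw [h2]
      have hg : g (l + 1) (i + 1) = g l i + (2 * (l : ℝ) - ((i : ℝ) + 1)) * g l (i + 1) := rfl
      rw [hg]; ring
    rw [Finset.sum_congr rfl hstep, Finset.sum_add_distrib]
    rw [Finset.sum_range_succ'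
      (fun i => g l i * (c ^ i * Kint c (2 * l - i) / ((2 * l - i).factorial : ℝ))),
      Finset.sum_range_succ
      (fun i => (2 * (l : ℝ) - ((i : ℝ) + 1)) * g l (i + 1)
        * (c ^ i * Kint c (2 * l - i) / ((2 * l - i).factorial : ℝ)))]
    rw [g_zero_of_pos l hl, g_eq_zero_of_lt l (l + 1) (by omega)]
    simp only [zero_mul, mul_zero, add_zero]
    rw [← Finset.sum_add_distrib]
    rw [Finset.sum_congr rfl (fun i hi => ?_)]
    · exact ih
    · -- per-term identity
      have hi' : i < l := Finset.mem_range.1 hi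
      obtain ⟨n, hn⟩ := Nat.exists_eq_add_of_le (show i + 2 ≤ 2 * l by omega)
      have e0 : 2 * l - i - 2 = n := by omega
      have e1 : 2 * l - (i + 1) = n + 1 := by omega
      have e2 : 2 * l - i = n + 2 := by omega
      have e3 : 2 * (l : ℝ) - (((i : ℝ)) + 1) = (n : ℝ) + 1 := by
        have := congrArg (fun m : ℕ => (m : ℝ)) hn
        push_cast at this; linarith
      rw [e0, e1, e2, e3]
      linear_combination (g l (i + 1) * c ^ i) * key_frac hc n

end Stmt15

theorem stmt15 (l : ℕ) (hl : 1 ≤ l) (c : ℝ) (hc : 0 < c) :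
    ∑ r ∈ Finset.Icc 1 l, C l r * I l r c = 1 := by
  rw [← Finset.Ico_add_one_right_eq_Icc, Finset.sum_Ico_eq_sum_range]
  have hlen : l + 1 - 1 = l := rfl
  rw [hlen]
  rw [Finset.sum_congr rfl (fun i hi => ?_)]
  · exact Stmt15.main_induction hc l hl
  · have hi' : i < l := Finset.mem_range.1 hi
    rw [Stmt15.C_eq_g]
    have h1 : 1 + i = i + 1 := by omega
    have h2 : 2 * l - (i + 1) - 1 = 2 * l - i - 2 := by omega
    have h3 : (i + 1) - 1 = i := rfl
    rw [h1]
    show Stmt15.g l (i + 1) * ((c ^ ((i + 1) - 1) / (Nat.factorial (2 * l - (i + 1) - 1) : ℝ))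
      * Stmt15.Kint c (2 * l - (i + 1) - 1)) = _
    rw [h2, h3]
    ring
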